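/- Fix ε > 0 and let D = {p̂ ∈ Δ(V) : ε < max_i p̂_i}. Then the value function of the one-step Decoding Game, M̄(p̂) = sup over q ∈ Δ(V) of inf over p ∈ N(p̂) of Σ_i q_i log p_i (values in the extended reals, log 0 = −∞), is real-valued and continuous on D. -/

import Mathlib

open Finset

noncomputable def elog (x : ℝ) : EReal := if x ≤ 0 then ⊥ else ((Real.log x : ℝ) : EReal)

def simplex (d : ℕ) : Set (Fin d → ℝ) := {p | (∀ i, 0 ≤ p i) ∧ ∑ i, p i = 1}

noncomputable def dTV {d : ℕ} (p q : Fin d → ℝ) : ℝ := (∑ i, |p i - q i|) / 2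

def nbhd {d : ℕ} (phat : Fin d → ℝ) (ε : ℝ) : Set (Fin d → ℝ) :=
  {p | p ∈ simplex d ∧ dTV p phat ≤ ε}

noncomputable def obj {d : ℕ} (q p : Fin d → ℝ) : EReal :=
  ∑ i, ((q i : ℝ) : EReal) * elog (p i)

/-- Value function of the one-step Decoding Game. -/
noncomputable def Mbar {d : ℕ} (ε : ℝ) (phat : Fin d → ℝ) : EReal :=
  ⨆ q ∈ simplex d, ⨅ p ∈ nbhd phat ε, obj q p

section helpers
variable {d : ℕ}

lemma simplex_le_one {p : Fin d → ℝ} (hp : p ∈ simplex d) (i : Fin d) : p i ≤ 1 := by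
  have := Finset.single_le_sum (f := p) (fun j _ => hp.1 j) (Finset.mem_univ i)
  simpa [hp.2] using this

lemma dTV_nonneg (p q : Fin d → ℝ) : 0 ≤ dTV p q := by
  unfold dTV; positivity

lemma dTV_self (p : Fin d → ℝ) : dTV p p = 0 := by simp [dTV]

lemma dTV_triangle (p q r : Fin d → ℝ) : dTV p r ≤ dTV p q + dTV q r := by
  unfold dTV
  rw [← add_div, div_le_div_iff_of_pos_right (by norm_num), ← Finset.sum_add_distrib]
  exact Finset.sum_le_sum fun i _ => abs_sub_le _ _ _

lemma coord_lb {p c : Fin d → ℝ} (hp : p ∈ simplex d) (hc : c ∈ simplex d)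
    {ε : ℝ} (hd : dTV p c ≤ ε) (i : Fin d) : c i - ε ≤ p i := by
  have h1 : ∑ j ∈ Finset.univ.erase i, (p j - c j) = c i - p i := by
    rw [Finset.sum_erase_eq_sub (Finset.mem_univ i), Finset.sum_sub_distrib, hp.2, hc.2]
    ring
  have h2 : ∑ j ∈ Finset.univ.erase i, (p j - c j) ≤ ∑ j ∈ Finset.univ.erase i, |p j - c j| :=
    Finset.sum_le_sum fun j _ => le_abs_self _
  have h3 : ∑ j ∈ Finset.univ.erase i, |p j - c j| = (∑ j, |p j - c j|) - |p i - c i| := by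
    rw [Finset.sum_erase_eq_sub (Finset.mem_univ i)]
  have h4 : c i - p i ≤ |p i - c i| := by
    rw [abs_sub_comm]; exact le_abs_self _
  have h5 : (∑ j, |p j - c j|) ≤ 2 * ε := by
    have : dTV p c = (∑ j, |p j - c j|) / 2 := rfl
    linarith [hd, this ▸ hd]
  linarith [h1 ▸ h2, h3 ▸ (h1 ▸ h2)]

lemma elog_mono {x y : ℝ} (h : x ≤ y) : elog x ≤ elog y := by
  unfold elog
  split_ifs with h1 h2 h2
  · exact le_rfl
  · exact bot_le
  · linarith
  · exact EReal.coe_le_coe_iff.2 (Real.log_le_log (lt_of_not_ge h1) h)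

lemma elog_pos_eq {x : ℝ} (h : 0 < x) : elog x = ((Real.log x : ℝ) : EReal) := by
  simp [elog, not_le.2 h]

lemma elog_nonpos {x : ℝ} (h : x ≤ 1) : elog x ≤ 0 := by
  unfold elog
  split_ifs with h1
  · exact bot_le
  · have : Real.log x ≤ 0 := Real.log_nonpos (le_of_not_ge h1) h
    calc ((Real.log x : ℝ) : EReal) ≤ ((0:ℝ):EReal) := EReal.coe_le_coe_iff.2 this
      _ = 0 := by norm_cast

lemma coe_sum {ι : Type*} (s : Finset ι) (f : ι → ℝ) :
    ((∑ i ∈ s, f i : ℝ) : EReal) = ∑ i ∈ s, ((f i : ℝ) : EReal) :=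
  map_sum (⟨⟨Real.toEReal, EReal.coe_zero⟩, EReal.coe_add⟩ : ℝ →+ EReal) f s

lemma obj_real {q p : Fin d → ℝ} (h : ∀ i, q i = 0 ∨ 0 < p i) :
    obj q p = ((∑ i, q i * Real.log (p i) : ℝ) : EReal) := by
  unfold obj
  rw [coe_sum]
  apply Finset.sum_congr rfl
  intro i _
  rcases h i with h0 | hpos
  · simp [h0]
  · rw [elog_pos_eq hpos, ← EReal.coe_mul]

lemma obj_nonpos {q p : Fin d → ℝ} (hq : q ∈ simplex d) (hp : p ∈ simplex d) :
    obj q p ≤ 0 := by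
  unfold obj
  apply Finset.sum_nonpos
  intro i _
  rcases eq_or_lt_of_le (hq.1 i) with h0 | hpos
  · simp [← h0]
  · rcases le_or_gt (p i) 0 with hp0 | hp0
    · rw [show elog (p i) = ⊥ by simp [elog, hp0], EReal.coe_mul_bot_of_pos hpos]
      exact bot_le
    · rw [elog_pos_eq hp0, ← EReal.coe_mul]
      have : q i * Real.log (p i) ≤ 0 :=
        mul_nonpos_of_nonneg_of_nonpos hpos.le (Real.log_nonpos hp0.le (simplex_le_one hp i))
      calc ((q i * Real.log (p i) : ℝ) : EReal) ≤ ((0:ℝ):EReal) := EReal.coe_le_coe_iff.2 this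
        _ = 0 := by norm_cast

lemma esum_le_single {f : Fin d → EReal} (j : Fin d) (h : ∀ i, f i ≤ 0) :
    ∑ i, f i ≤ f j := by
  rw [← Finset.add_sum_erase _ f (Finset.mem_univ j)]
  have h2 : ∑ i ∈ Finset.univ.erase j, f i ≤ 0 := Finset.sum_nonpos fun i _ => h i
  calc f j + ∑ i ∈ Finset.univ.erase j, f i ≤ f j + 0 := add_le_add_right h2 _
    _ = f j := add_zero _

def pm {d : ℕ} (i0 : Fin d) : Fin d → ℝ := fun i => if i = i0 then 1 else 0

lemma pm_simplex (i0 : Fin d) : pm i0 ∈ simplex d :=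
  ⟨fun i => by unfold pm; split <;> norm_num, by simp [pm]⟩

lemma obj_pm (p : Fin d → ℝ) (i0 : Fin d) : obj (pm i0) p = elog (p i0) := by
  unfold obj pm
  rw [Finset.sum_eq_single i0]
  · simp
  · intro b _ hb; simp [hb]
  · intro h; exact absurd (Finset.mem_univ i0) h

lemma self_mem_nbhd {c : Fin d → ℝ} (hc : c ∈ simplex d) {ε : ℝ} (hε : 0 ≤ ε) :
    c ∈ nbhd c ε := ⟨hc, by rw [dTV_self]; exact hε⟩

lemma nbhd_coord {c p : Fin d → ℝ} {ε : ℝ} (hc : c ∈ simplex d) (hp : p ∈ nbhd c ε) (i : Fin d) :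
    c i - ε ≤ p i := coord_lb hp.1 hc hp.2 i

lemma Mbar_nonpos {ε : ℝ} (hε : 0 < ε) {c : Fin d → ℝ} (hc : c ∈ simplex d) :
    Mbar ε c ≤ 0 := by
  apply iSup₂_le
  intro q hq
  exact (iInf₂_le c (self_mem_nbhd hc hε.le)).trans (obj_nonpos hq hc)

lemma Mbar_lb {ε : ℝ} (hε : 0 < ε) {c : Fin d → ℝ} (hc : c ∈ simplex d) {i0 : Fin d}
    (hi0 : ε < c i0) : ((Real.log (c i0 - ε) : ℝ) : EReal) ≤ Mbar ε c := by
  have h1 : ((Real.log (c i0 - ε) : ℝ) : EReal) ≤ ⨅ p ∈ nbhd c ε, obj (pm i0) p := by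
    apply le_iInf₂
    intro p hp
    rw [obj_pm]
    calc ((Real.log (c i0 - ε) : ℝ) : EReal) = elog (c i0 - ε) := (elog_pos_eq (by linarith)).symm
      _ ≤ elog (p i0) := elog_mono (nbhd_coord hc hp i0)
  exact h1.trans (le_iSup₂ (f := fun q (_ : q ∈ simplex d) => ⨅ p ∈ nbhd c ε, obj q p) (pm i0) (pm_simplex i0))

end helpers

section helpers2
variable {d : ℕ}

lemma mix_mem_nbhd {p c : Fin d → ℝ} {ε t : ℝ} (hp : p ∈ simplex d) (hc : c ∈ simplex d)
    (ht0 : 0 ≤ t) (ht1 : t ≤ 1) (hd : (1 - t) * dTV p c ≤ ε) :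
    (fun i => (1 - t) * p i + t * c i) ∈ nbhd c ε := by
  have h1t : 0 ≤ 1 - t := by linarith
  refine ⟨⟨fun i => ?_, ?_⟩, ?_⟩
  · show 0 ≤ (1 - t) * p i + t * c i
    nlinarith [hp.1 i, hc.1 i]
  · show ∑ i, ((1 - t) * p i + t * c i) = 1
    rw [Finset.sum_add_distrib, ← Finset.mul_sum, ← Finset.mul_sum, hp.2, hc.2]; ring
  · show (∑ i, |(1 - t) * p i + t * c i - c i|) / 2 ≤ ε
    have hsum : ∑ i, |(1 - t) * p i + t * c i - c i| = (1 - t) * ∑ i, |p i - c i| := by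
      rw [Finset.mul_sum]
      apply Finset.sum_congr rfl
      intro i _
      rw [show (1 - t) * p i + t * c i - c i = (1 - t) * (p i - c i) by ring, abs_mul,
        abs_of_nonneg h1t]
    rw [hsum]
    have : (1 - t) * ((∑ i, |p i - c i|) / 2) ≤ ε := hd
    linarith

lemma move_mem_nbhd {c : Fin d → ℝ} {ε' : ℝ} (hc : c ∈ simplex d) {j i0 : Fin d}
    (hji : j ≠ i0) (hε'0 : 0 ≤ ε') (hε'j : ε' ≤ c j) :
    (fun i => c i + (if i = i0 then ε' else 0) - (if i = j then ε' else 0)) ∈ nbhd c ε' := by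
  refine ⟨⟨fun i => ?_, ?_⟩, ?_⟩
  · show 0 ≤ c i + (if i = i0 then ε' else 0) - (if i = j then ε' else 0)
    rcases eq_or_ne i i0 with h | h
    · rw [if_pos h, if_neg (by rw [h]; exact Ne.symm hji)]
      have := hc.1 i; linarith
    · rcases eq_or_ne i j with h2 | h2
      · rw [if_neg h, if_pos h2, h2]; linarith
      · rw [if_neg h, if_neg h2]; have := hc.1 i; linarith
  · show ∑ i, (c i + (if i = i0 then ε' else 0) - (if i = j then ε' else 0)) = 1
    rw [Finset.sum_sub_distrib, Finset.sum_add_distrib, hc.2]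
    simp
  · show (∑ i, |c i + (if i = i0 then ε' else 0) - (if i = j then ε' else 0) - c i|) / 2 ≤ ε'
    have heq : ∀ i : Fin d, |c i + (if i = i0 then ε' else 0) - (if i = j then ε' else 0) - c i|
        = (if i = i0 then ε' else 0) + (if i = j then ε' else 0) := by
      intro i
      rcases eq_or_ne i i0 with h | h
      · have hij : i ≠ j := by rw [h]; exact Ne.symm hji
        rw [if_pos h, if_neg hij]
        rw [show c i + ε' - 0 - c i = ε' by ring, abs_of_nonneg hε'0]
        ring
      · rcases eq_or_ne i j with h2 | h2
        · rw [if_neg h, if_pos h2,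
            show c i + 0 - ε' - c i = -ε' by ring, abs_neg, abs_of_nonneg hε'0]
          ring
        · rw [if_neg h, if_neg h2]
          simp
    rw [Finset.sum_congr rfl (fun i _ => heq i), Finset.sum_add_distrib]
    simp

lemma term_nonpos {qi pi : ℝ} (hq : 0 ≤ qi) (hp : pi ≤ 1) :
    ((qi : ℝ) : EReal) * elog pi ≤ 0 := by
  rcases eq_or_lt_of_le hq with h0 | hpos
  · simp [← h0]
  · rcases le_or_gt pi 0 with hp0 | hp0
    · rw [show elog pi = ⊥ by simp [elog, hp0], EReal.coe_mul_bot_of_pos hpos]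
      exact bot_le
    · rw [elog_pos_eq hp0, ← EReal.coe_mul]
      have : qi * Real.log pi ≤ 0 :=
        mul_nonpos_of_nonneg_of_nonpos hpos.le (Real.log_nonpos hp0.le hp)
      calc ((qi * Real.log pi : ℝ) : EReal) ≤ ((0:ℝ):EReal) := EReal.coe_le_coe_iff.2 this
        _ = 0 := by norm_cast

lemma g_bot {ε : ℝ} (hε : 0 < ε) {c q : Fin d → ℝ} (hc : c ∈ simplex d) (hq : q ∈ simplex d)
    {i0 j : Fin d} (hi0 : ε < c i0) (hj : q j ≠ 0) (hcj : c j ≤ ε) :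
    (⨅ p ∈ nbhd c ε, obj q p) = ⊥ := by
  have hji0 : j ≠ i0 := by rintro rfl; linarith
  set p0 := fun i => c i + (if i = i0 then c j else 0) - (if i = j then c j else 0) with hp0def
  have hp0 : p0 ∈ nbhd c (c j) := move_mem_nbhd hc hji0 (hc.1 j) le_rfl
  have hp0' : p0 ∈ nbhd c ε := ⟨hp0.1, hp0.2.trans hcj⟩
  have hp0j : p0 j = 0 := by simp [hp0def, hji0]
  have hobj : obj q p0 = ⊥ := by
    have h1 : obj q p0 ≤ ((q j : ℝ) : EReal) * elog (p0 j) :=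
      esum_le_single j (fun i => term_nonpos (hq.1 i) (simplex_le_one hp0.1 i))
    rw [hp0j, show elog 0 = ⊥ by simp [elog],
      EReal.coe_mul_bot_of_pos (lt_of_le_of_ne (hq.1 j) (Ne.symm hj))] at h1
    exact le_bot_iff.1 h1
  exact le_bot_iff.1 ((iInf₂_le p0 hp0').trans_eq hobj)

lemma coe_le_add_coe_iff (r c : ℝ) (Y : EReal) :
    ((r : ℝ) : EReal) ≤ Y + ((c : ℝ) : EReal) ↔ ((r - c : ℝ) : EReal) ≤ Y := by
  induction Y using EReal.rec with
  | bot =>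
      rw [EReal.bot_add]
      constructor
      · intro hcon; exact (EReal.coe_ne_bot r (le_bot_iff.1 hcon)).elim
      · intro hcon; exact (EReal.coe_ne_bot _ (le_bot_iff.1 hcon)).elim
  | coe y =>
      rw [← EReal.coe_add, EReal.coe_le_coe_iff, EReal.coe_le_coe_iff]
      exact sub_le_iff_le_add.symm
  | top => simp [EReal.top_add_coe]

lemma transfer {ε : ℝ} (hε : 0 < ε) {a b q : Fin d → ℝ} (ha : a ∈ simplex d) (hb : b ∈ simplex d)
    (hq : q ∈ simplex d) {δ' ρ : ℝ} (hδ'0 : 0 ≤ δ') (hδρ : δ' < ρ)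
    (hclose : ∀ i, |a i - b i| ≤ δ') (hsupp : ∀ i, q i ≠ 0 → ε + ρ ≤ a i) :
    (⨅ p ∈ nbhd a ε, obj q p) ≤ (⨅ p ∈ nbhd b ε, obj q p)
      + ((dTV b a / (ε + dTV b a) / (ρ - δ') : ℝ) : EReal) := by
  set D0 := dTV b a with hD0def
  set t := D0 / (ε + D0) with htdef
  set E := t / (ρ - δ') with hEdef
  have hD0 : 0 ≤ D0 := dTV_nonneg _ _
  have hεD : 0 < ε + D0 := by linarith
  have ht0 : 0 ≤ t := div_nonneg hD0 hεD.le
  have ht1 : t < 1 := (div_lt_one hεD).2 (by linarith)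
  have hρδ : 0 < ρ - δ' := by linarith
  have hE0 : 0 ≤ E := div_nonneg ht0 hρδ.le
  -- lower bound for obj q p over any p in simplex with p i ≥ ρ - δ' on supp
  have hlow : ∀ i, q i ≠ 0 → ∀ p ∈ nbhd b ε, ρ - δ' ≤ p i := by
    intro i hi p hp
    have h1 : b i - ε ≤ p i := nbhd_coord hb hp i
    have h2 : a i - δ' ≤ b i := by have := hclose i; have := abs_le.1 this; linarith [this.1, this.2]
    have h3 := hsupp i hi
    linarith
  -- X is real
  set X := ⨅ p ∈ nbhd a ε, obj q p with hXdef
  have hXtop : X ≤ 0 := (iInf₂_le a (self_mem_nbhd ha hε.le)).trans (obj_nonpos hq ha)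
  have hXbot : ((Real.log ρ : ℝ) : EReal) ≤ X := by
    apply le_iInf₂
    intro p hp
    have hpos : ∀ i, q i = 0 ∨ 0 < p i := by
      intro i
      rcases eq_or_ne (q i) 0 with h | h
      · exact Or.inl h
      · right
        have := nbhd_coord ha hp i
        have := hsupp i h
        linarith
    rw [obj_real hpos]
    apply EReal.coe_le_coe_iff.2
    have : ∀ i, q i * Real.log ρ ≤ q i * Real.log (p i) := by
      intro i
      rcases eq_or_ne (q i) 0 with h | h
      · simp [h]
      · apply mul_le_mul_of_nonneg_left _ (hq.1 i)
        apply Real.log_le_log (by linarith)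
        have := nbhd_coord ha hp i
        have := hsupp i h
        linarith
    calc Real.log ρ = ∑ i, q i * Real.log ρ := by rw [← Finset.sum_mul, hq.2, one_mul]
      _ ≤ ∑ i, q i * Real.log (p i) := Finset.sum_le_sum fun i _ => this i
  have hXne : X = ((X.toReal : ℝ) : EReal) :=
    (EReal.coe_toReal (fun h => by rw [h] at hXtop; exact absurd hXtop (by simp))
      (fun h => by rw [h] at hXbot; exact absurd hXbot (by simp))).symm
  rw [hXne, coe_le_add_coe_iff]
  apply le_iInf₂
  intro p hp
  -- the shifted point P
  set P := fun i => (1 - t) * p i + t * a i with hPdef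
  have hdtv : dTV p a ≤ ε + D0 := by
    calc dTV p a ≤ dTV p b + dTV b a := dTV_triangle p b a
      _ ≤ ε + D0 := by rw [hD0def]; linarith [hp.2]
  have hPmem : P ∈ nbhd a ε := by
    apply mix_mem_nbhd hp.1 ha ht0 ht1.le
    have h1t : (1 - t) = ε / (ε + D0) := by
      rw [htdef]; field_simp; ring
    calc (1 - t) * dTV p a ≤ (1 - t) * (ε + D0) := by
          apply mul_le_mul_of_nonneg_left hdtv (by linarith)
      _ = ε := by rw [h1t]; field_simp
  -- positivity on support
  have hppos : ∀ i, q i = 0 ∨ 0 < p i := by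
    intro i
    rcases eq_or_ne (q i) 0 with h | h
    · exact Or.inl h
    · exact Or.inr (lt_of_lt_of_le hρδ (hlow i h p hp))
  have hPpos : ∀ i, q i = 0 ∨ 0 < P i := by
    intro i
    rcases hppos i with h | h
    · exact Or.inl h
    · right
      have hai := ha.1 i
      have h1t : 0 < 1 - t := by linarith
      show 0 < (1 - t) * p i + t * a i
      nlinarith
  -- key real inequality
  have hXP : X ≤ obj q P := iInf₂_le P hPmem
  rw [hXne, obj_real hPpos, EReal.coe_le_coe_iff] at hXP
  rw [obj_real hppos, EReal.coe_le_coe_iff]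
  have hterm : ∀ i, q i * Real.log (P i) ≤ q i * Real.log (p i) + q i * E := by
    intro i
    rcases eq_or_ne (q i) 0 with h | h
    · simp [h]
    · have hpi : ρ - δ' ≤ p i := hlow i h p hp
      have hpipos : 0 < p i := lt_of_lt_of_le hρδ hpi
      have hPle : P i ≤ p i + t := by
        show (1 - t) * p i + t * a i ≤ p i + t
        have h1 : a i ≤ 1 := simplex_le_one ha i
        have h2 : 0 ≤ p i := hp.1.1 i
        nlinarith
      have hPipos : 0 < P i := (hPpos i).resolve_left h
      have hlog1 : Real.log (P i) ≤ Real.log (p i + t) := Real.log_le_log hPipos hPle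
      have hlog2 : Real.log (p i + t) ≤ Real.log (p i) + t / p i := by
        have hd : Real.log ((p i + t) / p i) ≤ (p i + t) / p i - 1 :=
          Real.log_le_sub_one_of_pos (by positivity)
        rw [Real.log_div (by positivity) (ne_of_gt hpipos)] at hd
        have : (p i + t) / p i - 1 = t / p i := by field_simp; ring
        linarith [hd, this ▸ hd]
      have hlog3 : t / p i ≤ E := by
        rw [hEdef]
        exact div_le_div_of_nonneg_left ht0 hρδ hpi
      have : Real.log (P i) ≤ Real.log (p i) + E := by linarith
      calc q i * Real.log (P i) ≤ q i * (Real.log (p i) + E) :=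
            mul_le_mul_of_nonneg_left this (hq.1 i)
        _ = q i * Real.log (p i) + q i * E := by ring
  have hsum : ∑ i, q i * Real.log (P i) ≤ ∑ i, q i * Real.log (p i) + E := by
    calc ∑ i, q i * Real.log (P i) ≤ ∑ i, (q i * Real.log (p i) + q i * E) :=
          Finset.sum_le_sum fun i _ => hterm i
      _ = ∑ i, q i * Real.log (p i) + (∑ i, q i) * E := by
          rw [Finset.sum_add_distrib, Finset.sum_mul]
      _ = ∑ i, q i * Real.log (p i) + E := by rw [hq.2, one_mul]
  linarith

end helpers2

section helpers3
variable {d : ℕ}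

lemma trunc {ε : ℝ} (hε : 0 < ε) {b q : Fin d → ℝ} (hb : b ∈ simplex d) (hq : q ∈ simplex d)
    {i0 : Fin d} {κ : ℝ} (hκ0 : 0 < κ) (hbi : ε + κ ≤ b i0)
    {ρ' : ℝ} (hρ'0 : 0 < ρ') (hρ'κ : ρ' ≤ κ) (hρ'1 : ρ' < 1)
    (hsupp : ∀ i, q i ≠ 0 → ε < b i)
    {m : ℝ} (hm : m ≤ 0) (hg : ((m : ℝ) : EReal) ≤ ⨅ p ∈ nbhd b ε, obj q p) :
    ∃ q2 : Fin d → ℝ, q2 ∈ simplex d ∧ (∀ i, q2 i ≠ 0 → ε + ρ' ≤ b i) ∧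
      ((m + (d : ℝ) * (m / Real.log ρ') * Real.log κ : ℝ) : EReal)
        ≤ ⨅ p ∈ nbhd b ε, obj q2 p := by
  have hlogρ' : Real.log ρ' < 0 := Real.log_neg hρ'0 hρ'1
  have hκ1 : κ ≤ 1 := by have := simplex_le_one hb i0; linarith
  have hlogκ : Real.log κ ≤ 0 := Real.log_nonpos hκ0.le hκ1
  set β := m / Real.log ρ' with hβdef
  have hβ0 : 0 ≤ β := by
    rw [hβdef]
    exact div_nonneg_of_nonpos (by linarith) (by linarith)
  -- Step A : mass bound on bad coordinates
  have hA : ∀ j, q j ≠ 0 → b j < ε + ρ' → q j ≤ β := by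
    intro j hj hbj
    have hji0 : j ≠ i0 := by intro h; rw [h] at hbj; linarith
    have hbjε : ε < b j := hsupp j hj
    set p0 := fun i => b i + (if i = i0 then ε else 0) - (if i = j then ε else 0) with hp0def
    have hp0 : p0 ∈ nbhd b ε := move_mem_nbhd hb hji0 hε.le hbjε.le
    have hp0j : p0 j = b j - ε := by simp [hp0def, hji0]
    have h1 : obj q p0 ≤ ((q j : ℝ) : EReal) * elog (p0 j) :=
      esum_le_single j (fun i => term_nonpos (hq.1 i) (simplex_le_one hp0.1 i))
    have h2 : ((q j : ℝ) : EReal) * elog (p0 j) ≤ ((q j * Real.log ρ' : ℝ) : EReal) := by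
      rw [hp0j, elog_pos_eq (by linarith), ← EReal.coe_mul]
      apply EReal.coe_le_coe_iff.2
      apply mul_le_mul_of_nonneg_left _ (hq.1 j)
      exact (Real.log_le_log (by linarith) (by linarith))
    have h3 : ((m : ℝ) : EReal) ≤ ((q j * Real.log ρ' : ℝ) : EReal) :=
      (hg.trans (iInf₂_le p0 hp0)).trans (h1.trans h2)
    have h4 : m ≤ q j * Real.log ρ' := EReal.coe_le_coe_iff.1 h3
    rw [hβdef]
    exact (le_div_iff_of_neg hlogρ').2 h4
  -- Step B : total bad mass
  set Bset := Finset.univ.filter (fun i : Fin d => b i < ε + ρ') with hBdef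
  set μ := ∑ i ∈ Bset, q i with hμdef
  have hμ0 : 0 ≤ μ := Finset.sum_nonneg fun i _ => hq.1 i
  have hμβ : μ ≤ (d : ℝ) * β := by
    have h1 : ∀ i ∈ Bset, q i ≤ β := by
      intro i hi
      rcases eq_or_ne (q i) 0 with h | h
      · rw [h]; exact hβ0
      · exact hA i h (by simpa [hBdef] using hi)
    calc μ ≤ Bset.card • β := Finset.sum_le_card_nsmul Bset q β h1
      _ = (Bset.card : ℝ) * β := nsmul_eq_mul _ _
      _ ≤ (d : ℝ) * β := by
          apply mul_le_mul_of_nonneg_right _ hβ0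
          have : Bset.card ≤ d := le_trans (Finset.card_le_univ Bset) (by simp)
          exact_mod_cast this
  -- Step C : the modified strategy
  have hi0good : ¬ (b i0 < ε + ρ') := by linarith
  set q2 := fun i => (if b i < ε + ρ' then 0 else q i) + (if i = i0 then μ else 0) with hq2def
  have hq2mem : q2 ∈ simplex d := by
    constructor
    · intro i
      show 0 ≤ (if b i < ε + ρ' then 0 else q i) + (if i = i0 then μ else 0)
      have h1 : 0 ≤ (if b i < ε + ρ' then 0 else q i) := by
        split
        · exact le_refl 0
        · exact hq.1 i
      have h2 : 0 ≤ (if i = i0 then μ else 0) := by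
        split
        · exact hμ0
        · exact le_refl 0
      linarith
    · show ∑ i, ((if b i < ε + ρ' then 0 else q i) + (if i = i0 then μ else 0)) = 1
      rw [Finset.sum_add_distrib]
      have h1 : ∑ i, (if b i < ε + ρ' then 0 else q i)
          = ∑ i ∈ Finset.univ.filter (fun i => ¬ (b i < ε + ρ')), q i := by
        rw [Finset.sum_filter]
        apply Finset.sum_congr rfl
        intro i _
        by_cases h : b i < ε + ρ' <;> simp [h]
      have h2 : ∑ i ∈ Bset, q i + ∑ i ∈ Finset.univ.filter (fun i => ¬ (b i < ε + ρ')), q i = 1 := by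
        rw [hBdef, Finset.sum_filter_add_sum_filter_not, hq.2]
      have h3 : ∑ i, (if i = i0 then μ else 0) = μ := by
        rw [Finset.sum_ite_eq']; simp
      rw [h1, h3]
      linarith [h2]
  have hq2supp : ∀ i, q2 i ≠ 0 → ε + ρ' ≤ b i := by
    intro i hi
    rcases eq_or_ne i i0 with h | h
    · rw [h]; linarith
    · by_contra hcon
      apply hi
      show (if b i < ε + ρ' then 0 else q i) + (if i = i0 then μ else 0) = 0
      rw [if_pos (not_le.1 hcon), if_neg h, add_zero]
  refine ⟨q2, hq2mem, hq2supp, ?_⟩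
  -- Step D : value bound
  apply le_iInf₂
  intro p hp
  have hqpos : ∀ i, q i = 0 ∨ 0 < p i := by
    intro i
    rcases eq_or_ne (q i) 0 with h | h
    · exact Or.inl h
    · right; have := nbhd_coord hb hp i; have := hsupp i h; linarith
  have hq2pos : ∀ i, q2 i = 0 ∨ 0 < p i := by
    intro i
    rcases eq_or_ne (q2 i) 0 with h | h
    · exact Or.inl h
    · right; have := nbhd_coord hb hp i; have := hq2supp i h; linarith
  have hpi0 : κ ≤ p i0 := by have := nbhd_coord hb hp i0; linarith
  rw [obj_real hq2pos]
  apply EReal.coe_le_coe_iff.2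
  have hgp : m ≤ ∑ i, q i * Real.log (p i) := by
    have := hg.trans (iInf₂_le p hp)
    rw [obj_real hqpos] at this
    exact EReal.coe_le_coe_iff.1 this
  set g := fun i => q i * Real.log (p i) with hgdef
  have hsplit : ∑ i, q2 i * Real.log (p i)
      = (∑ i, (if b i < ε + ρ' then 0 else g i)) + μ * Real.log (p i0) := by
    have h1 : ∀ i, q2 i * Real.log (p i)
        = (if b i < ε + ρ' then 0 else g i) + (if i = i0 then μ * Real.log (p i) else 0) := by
      intro i
      show ((if b i < ε + ρ' then 0 else q i) + (if i = i0 then μ else 0)) * Real.log (p i) = _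
      simp only [add_mul, ite_mul, zero_mul, hgdef]
    rw [Finset.sum_congr rfl (fun i _ => h1 i), Finset.sum_add_distrib]
    congr 1
    rw [Finset.sum_ite_eq']
    simp
  have hfirst : ∑ i, (if b i < ε + ρ' then 0 else g i)
      = ∑ i, g i - ∑ i ∈ Bset, g i := by
    have h1 : ∑ i, (if b i < ε + ρ' then 0 else g i)
        = ∑ i ∈ Finset.univ.filter (fun i => ¬ (b i < ε + ρ')), g i := by
      rw [Finset.sum_filter]
      apply Finset.sum_congr rfl
      intro i _
      by_cases h : b i < ε + ρ' <;> simp [h]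
    have h2 : ∑ i ∈ Bset, g i + ∑ i ∈ Finset.univ.filter (fun i => ¬ (b i < ε + ρ')), g i
        = ∑ i, g i := by
      rw [hBdef, Finset.sum_filter_add_sum_filter_not]
    rw [h1]; linarith
  have hBneg : ∑ i ∈ Bset, g i ≤ 0 := by
    apply Finset.sum_nonpos
    intro i _
    apply mul_nonpos_of_nonneg_of_nonpos (hq.1 i)
    apply Real.log_nonpos (hp.1.1 i) (simplex_le_one hp.1 i)
  have hμκ : μ * Real.log κ ≤ μ * Real.log (p i0) :=
    mul_le_mul_of_nonneg_left (Real.log_le_log hκ0 hpi0) hμ0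
  have hdβ : (d : ℝ) * β * Real.log κ ≤ μ * Real.log κ :=
    mul_le_mul_of_nonpos_right hμβ hlogκ
  rw [hsplit, hfirst]
  calc m + (d : ℝ) * (m / Real.log ρ') * Real.log κ
      = m + (d : ℝ) * β * Real.log κ := by rw [hβdef]
    _ ≤ ∑ i, g i - ∑ i ∈ Bset, g i + μ * Real.log (p i0) := by linarith
end helpers3

section helpers4
variable {d : ℕ}

lemma Mbar_real {ε : ℝ} (hε : 0 < ε) {c : Fin d → ℝ} (hc : c ∈ simplex d) {i0 : Fin d}
    (hi0 : ε < c i0) : Mbar ε c = (((Mbar ε c).toReal : ℝ) : EReal) := by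
  refine (EReal.coe_toReal ?_ ?_).symm
  · intro h
    have := Mbar_nonpos hε hc
    rw [h] at this
    exact absurd this (by simp)
  · intro h
    have := Mbar_lb hε hc hi0
    rw [h] at this
    exact absurd this (by simp)

lemma Mbar_toReal_nonpos {ε : ℝ} (hε : 0 < ε) {c : Fin d → ℝ} (hc : c ∈ simplex d) {i0 : Fin d}
    (hi0 : ε < c i0) : (Mbar ε c).toReal ≤ 0 := by
  have h1 := Mbar_nonpos hε hc
  rw [Mbar_real hε hc hi0] at h1
  have : (((Mbar ε c).toReal : ℝ) : EReal) ≤ ((0 : ℝ) : EReal) := by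
    rw [EReal.coe_zero]; exact h1
  exact EReal.coe_le_coe_iff.1 this

lemma Mbar_toReal_lb {ε : ℝ} (hε : 0 < ε) {c : Fin d → ℝ} (hc : c ∈ simplex d) {i0 : Fin d}
    (hi0 : ε < c i0) : Real.log (c i0 - ε) ≤ (Mbar ε c).toReal := by
  have h1 := Mbar_lb hε hc hi0
  rw [Mbar_real hε hc hi0] at h1
  exact EReal.coe_le_coe_iff.1 h1

lemma exists_good_q {ε : ℝ} (hε : 0 < ε) {c : Fin d → ℝ} (hc : c ∈ simplex d) {i0 : Fin d}
    (hi0 : ε < c i0) {η : ℝ} (hη : 0 < η) :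
    ∃ q, q ∈ simplex d ∧ (∀ i, q i ≠ 0 → ε < c i) ∧
      ((((Mbar ε c).toReal - η : ℝ) : EReal) ≤ ⨅ p ∈ nbhd c ε, obj q p) := by
  have hlt : ((((Mbar ε c).toReal - η : ℝ) : EReal)) < Mbar ε c := by
    conv_rhs => rw [Mbar_real hε hc hi0]
    exact EReal.coe_lt_coe_iff.2 (by linarith)
  have hlt2 : ((((Mbar ε c).toReal - η : ℝ) : EReal))
      < ⨆ q ∈ simplex d, ⨅ p ∈ nbhd c ε, obj q p := hlt
  obtain ⟨q, hq⟩ := lt_iSup_iff.1 hlt2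
  obtain ⟨hqs, hq2⟩ := lt_iSup_iff.1 hq
  refine ⟨q, hqs, ?_, hq2.le⟩
  intro i hi
  by_contra hcon
  rw [g_bot hε hc hqs hi0 hi (not_lt.1 hcon)] at hq2
  exact absurd hq2 (by simp)

end helpers4

section main
variable {d : ℕ}

lemma Ebound {ε δ D0 σ C : ℝ} (hε : 0 < ε) (hD00 : 0 ≤ D0) (hD0ub : D0 ≤ (d:ℝ)*δ/2)
    (hσ0 : 0 < σ) (hδσ : δ ≤ σ/2) (hδC : δ ≤ ε*σ*C/(2*((d:ℝ)+1))) (hC0 : 0 ≤ C)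
    (hδ0 : 0 ≤ δ) : D0/(ε+D0)/(σ-δ) ≤ C/2 := by
  have hd1 : (0:ℝ) < (d:ℝ) + 1 := by positivity
  have hσδ : 0 < σ - δ := by linarith
  have hεne : ε ≠ 0 := ne_of_gt hε
  have hσne : σ ≠ 0 := ne_of_gt hσ0
  have hd1ne : (d:ℝ) + 1 ≠ 0 := ne_of_gt hd1
  have step1 : D0/(ε+D0)/(σ-δ) ≤ ((d:ℝ)*δ/2)/ε/(σ/2) := by
    gcongr
    · linarith
    · linarith
  have step2 : ((d:ℝ)*δ/2)/ε/(σ/2) = (d:ℝ)*δ/(ε*σ) := by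
    field_simp
  have step3 : (d:ℝ)*δ/(ε*σ) ≤ (d:ℝ)*(ε*σ*C/(2*((d:ℝ)+1)))/(ε*σ) := by
    gcongr
  have step4 : (d:ℝ)*(ε*σ*C/(2*((d:ℝ)+1)))/(ε*σ) = C/2 * ((d:ℝ)/((d:ℝ)+1)) := by
    field_simp
  have step5 : C/2 * ((d:ℝ)/((d:ℝ)+1)) ≤ C/2 := by
    have h1 : (d:ℝ)/((d:ℝ)+1) ≤ 1 := by
      rw [div_le_one hd1]; linarith
    nlinarith
  calc D0/(ε+D0)/(σ-δ) ≤ ((d:ℝ)*δ/2)/ε/(σ/2) := step1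
    _ = (d:ℝ)*δ/(ε*σ) := step2
    _ ≤ (d:ℝ)*(ε*σ*C/(2*((d:ℝ)+1)))/(ε*σ) := step3
    _ = C/2 * ((d:ℝ)/((d:ℝ)+1)) := step4
    _ ≤ C/2 := step5

set_option maxHeartbeats 1000000 in
lemma key_estimate {ε : ℝ} (hε : 0 < ε) {a : Fin d → ℝ} (has : a ∈ simplex d)
    {i0 : Fin d} (hi0 : ε < a i0) {η : ℝ} (hη : 0 < η) :
    ∃ δ > 0, ∀ b : Fin d → ℝ, b ∈ simplex d → (∀ i, |b i - a i| ≤ δ) →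
      |(Mbar ε b).toReal - (Mbar ε a).toReal| ≤ η := by
  set κ := (a i0 - ε) / 2 with hκdef
  have hκ0 : 0 < κ := by rw [hκdef]; linarith
  have hai0 : a i0 = ε + 2*κ := by rw [hκdef]; ring
  have hκ1 : κ ≤ 1/2 := by
    have := simplex_le_one has i0
    rw [hκdef]; linarith
  have hlogκ : Real.log κ ≤ 0 := Real.log_nonpos hκ0.le (by linarith)
  -- chain-1 data
  obtain ⟨q1, hq1s, hq1supp, hq1g⟩ := exists_good_q hε has hi0 (show (0:ℝ) < η/2 by linarith)
  set S := Finset.univ.filter (fun i => q1 i ≠ 0) with hSdef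
  have hSne : S.Nonempty := by
    obtain ⟨i, _, hi⟩ := Finset.exists_ne_zero_of_sum_ne_zero
      (show ∑ i, q1 i ≠ 0 by rw [hq1s.2]; norm_num)
    exact ⟨i, Finset.mem_filter.2 ⟨Finset.mem_univ i, hi⟩⟩
  set ρ := S.inf' hSne (fun i => a i - ε) with hρdef
  have hρ0 : 0 < ρ := by
    rw [hρdef, Finset.lt_inf'_iff]
    intro i hi
    have := hq1supp i (Finset.mem_filter.1 hi).2
    linarith
  have hρsupp : ∀ i, q1 i ≠ 0 → ε + ρ ≤ a i := by
    intro i hi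
    have h1 : ρ ≤ a i - ε := by
      rw [hρdef]
      exact Finset.inf'_le _ (Finset.mem_filter.2 ⟨Finset.mem_univ i, hi⟩)
    linarith
  -- chain-2 constants
  set Cm := η/4 - Real.log κ with hCmdef
  have hCm0 : 0 < Cm := by rw [hCmdef]; linarith
  set A := (d:ℝ) * Cm * (-Real.log κ) with hAdef
  have hA0 : 0 ≤ A := by
    rw [hAdef]
    apply mul_nonneg (mul_nonneg (by positivity) hCm0.le) (by linarith)
  set X0 := (A + 1) * (4/η) with hX0def
  have hX00 : 0 < X0 := by rw [hX0def]; positivity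
  set ρ' := min κ (min (1/2) (Real.exp (-X0))) with hρ'def
  have hρ'0 : 0 < ρ' := lt_min hκ0 (lt_min (by norm_num) (Real.exp_pos _))
  have hρ'κ : ρ' ≤ κ := min_le_left _ _
  have hρ'half : ρ' ≤ 1/2 := le_trans (min_le_right _ _) (min_le_left _ _)
  have hρ'1 : ρ' < 1 := by linarith
  have hlogρ'X : Real.log ρ' ≤ -X0 := by
    calc Real.log ρ' ≤ Real.log (Real.exp (-X0)) :=
          Real.log_le_log hρ'0 (le_trans (min_le_right _ _) (min_le_right _ _))
      _ = -X0 := Real.log_exp _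
  have hlogρ'neg : Real.log ρ' < 0 := Real.log_neg hρ'0 hρ'1
  -- choice of δ
  have hd1 : (0:ℝ) < (d:ℝ) + 1 := by positivity
  set δ := min (min κ (min (ρ/2) (ρ'/2)))
      (min (ε*ρ*η/(2*((d:ℝ)+1))) (ε*ρ'*η/(4*((d:ℝ)+1)))) with hδdef
  have hδ0 : 0 < δ := by
    apply lt_min (lt_min hκ0 (lt_min (by linarith) (by linarith)))
    exact lt_min (div_pos (mul_pos (mul_pos hε hρ0) hη) (by positivity))
      (div_pos (mul_pos (mul_pos hε hρ'0) hη) (by positivity))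
  refine ⟨δ, hδ0, ?_⟩
  intro b hbs hclose
  have hδκ : δ ≤ κ := le_trans (min_le_left _ _) (min_le_left _ _)
  have hδρ : δ ≤ ρ/2 := le_trans (min_le_left _ _) (le_trans (min_le_right _ _) (min_le_left _ _))
  have hδρ' : δ ≤ ρ'/2 := le_trans (min_le_left _ _) (le_trans (min_le_right _ _) (min_le_right _ _))
  have hδA : δ ≤ ε*ρ*η/(2*((d:ℝ)+1)) := le_trans (min_le_right _ _) (min_le_left _ _)
  have hδB : δ ≤ ε*ρ'*η/(4*((d:ℝ)+1)) := le_trans (min_le_right _ _) (min_le_right _ _)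
  have hcl1 : ∀ i, |a i - b i| ≤ δ := fun i => by rw [abs_sub_comm]; exact hclose i
  have hbi0 : ε + κ ≤ b i0 := by
    have h1 := abs_le.1 (hcl1 i0)
    have h2 := h1.2
    linarith
  have hbi0' : ε < b i0 := by linarith
  have hmb0 : (Mbar ε b).toReal ≤ 0 := Mbar_toReal_nonpos hε hbs hbi0'
  have hma0 : (Mbar ε a).toReal ≤ 0 := Mbar_toReal_nonpos hε has hi0
  have hmblb : Real.log κ ≤ (Mbar ε b).toReal := by
    have h1 := Mbar_toReal_lb hε hbs hbi0'
    have h2 : Real.log κ ≤ Real.log (b i0 - ε) := Real.log_le_log hκ0 (by linarith)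
    linarith
  have hmaeq : Mbar ε a = (((Mbar ε a).toReal : ℝ) : EReal) := Mbar_real hε has hi0
  have hmbeq : Mbar ε b = (((Mbar ε b).toReal : ℝ) : EReal) := Mbar_real hε hbs hbi0'
  -- dTV bounds
  have hdtv1 : dTV b a ≤ (d:ℝ) * δ / 2 := by
    have h1 : ∑ i, |b i - a i| ≤ ∑ _i : Fin d, δ := Finset.sum_le_sum (fun i _ => hclose i)
    rw [Finset.sum_const, Finset.card_univ, Fintype.card_fin, nsmul_eq_mul] at h1
    show (∑ i, |b i - a i|) / 2 ≤ (d:ℝ) * δ / 2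
    linarith
  have hdtv2 : dTV a b ≤ (d:ℝ) * δ / 2 := by
    have h1 : ∑ i, |a i - b i| ≤ ∑ _i : Fin d, δ := Finset.sum_le_sum (fun i _ => hcl1 i)
    rw [Finset.sum_const, Finset.card_univ, Fintype.card_fin, nsmul_eq_mul] at h1
    show (∑ i, |a i - b i|) / 2 ≤ (d:ℝ) * δ / 2
    linarith
  have hEbound : ∀ D0 σ C : ℝ, 0 ≤ D0 → D0 ≤ (d:ℝ)*δ/2 → 0 < σ → δ ≤ σ/2 →
      δ ≤ ε*σ*C/(2*((d:ℝ)+1)) → 0 ≤ C → D0/(ε+D0)/(σ-δ) ≤ C/2 :=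
    fun D0 σ C h1 h2 h3 h4 h5 h6 => Ebound hε h1 h2 h3 h4 h5 h6 hδ0.le
  -- Chain 1 : Mbar a ≤ Mbar b + η
  have hc1 : (Mbar ε a).toReal ≤ (Mbar ε b).toReal + η := by
    have htr1 := transfer hε has hbs hq1s hδ0.le (by linarith : δ < ρ) hcl1 hρsupp
    have hE1 : dTV b a / (ε + dTV b a) / (ρ - δ) ≤ η/2 :=
      hEbound (dTV b a) ρ η (dTV_nonneg _ _) hdtv1 hρ0 hδρ hδA hη.le
    have hgb1 : (⨅ p ∈ nbhd b ε, obj q1 p) ≤ Mbar ε b :=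
      le_iSup₂ (f := fun q (_ : q ∈ simplex d) => ⨅ p ∈ nbhd b ε, obj q p) q1 hq1s
    have h1 : (((Mbar ε a).toReal : ℝ) : EReal) ≤ (⨅ p ∈ nbhd a ε, obj q1 p) + ((η/2 : ℝ) : EReal) :=
      (coe_le_add_coe_iff _ _ _).2 hq1g
    have hfinal : (((Mbar ε a).toReal : ℝ) : EReal)
        ≤ (((Mbar ε b).toReal + η : ℝ) : EReal) := by
      calc (((Mbar ε a).toReal : ℝ) : EReal)
          ≤ (⨅ p ∈ nbhd a ε, obj q1 p) + ((η/2 : ℝ) : EReal) := h1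
        _ ≤ ((⨅ p ∈ nbhd b ε, obj q1 p) + ((dTV b a / (ε + dTV b a) / (ρ - δ) : ℝ) : EReal))
              + ((η/2 : ℝ) : EReal) := add_le_add_left htr1 _
        _ ≤ (((((Mbar ε b).toReal : ℝ) : EReal) + ((η/2 : ℝ) : EReal)) + ((η/2 : ℝ) : EReal)) :=
              add_le_add_left (add_le_add (hgb1.trans (le_of_eq hmbeq))
                (EReal.coe_le_coe_iff.2 hE1)) _
        _ = (((Mbar ε b).toReal + η : ℝ) : EReal) := by
              rw [show (Mbar ε b).toReal + η = (Mbar ε b).toReal + η/2 + η/2 by ring,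
                EReal.coe_add, EReal.coe_add]
    have := EReal.coe_le_coe_iff.1 hfinal
    linarith
  -- Chain 2 : Mbar b ≤ Mbar a + η
  have hc2 : (Mbar ε b).toReal ≤ (Mbar ε a).toReal + η := by
    obtain ⟨q3, hq3s, hq3supp, hq3g⟩ := exists_good_q hε hbs hbi0' (show (0:ℝ) < η/4 by linarith)
    obtain ⟨q2, hq2s, hq2supp, hq2g⟩ := trunc hε hbs hq3s hκ0 hbi0 hρ'0 hρ'κ hρ'1 hq3supp
      (show (Mbar ε b).toReal - η/4 ≤ 0 by linarith) hq3g
    -- bound on the truncation error E2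
    have hβ0 : 0 ≤ ((Mbar ε b).toReal - η/4) / Real.log ρ' :=
      div_nonneg_of_nonpos (by linarith) hlogρ'neg.le
    have hX0le : X0 ≤ -Real.log ρ' := by linarith
    have hlogρ'ne : Real.log ρ' ≠ 0 := ne_of_lt hlogρ'neg
    have h1 : (((Mbar ε b).toReal - η/4) / Real.log ρ') * X0 ≤ -((Mbar ε b).toReal - η/4) := by
      calc (((Mbar ε b).toReal - η/4) / Real.log ρ') * X0
          ≤ (((Mbar ε b).toReal - η/4) / Real.log ρ') * (-Real.log ρ') :=
            mul_le_mul_of_nonneg_left hX0le hβ0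
        _ = -((Mbar ε b).toReal - η/4) := by field_simp
    have hmub : -((Mbar ε b).toReal - η/4) ≤ Cm := by rw [hCmdef]; linarith
    have hβub : ((Mbar ε b).toReal - η/4) / Real.log ρ' ≤ Cm / X0 := by
      rw [le_div_iff₀ hX00]
      linarith
    have hnegE2 : -((d:ℝ) * (((Mbar ε b).toReal - η/4) / Real.log ρ') * Real.log κ) ≤ η/4 := by
      have h3 : (d:ℝ) * (((Mbar ε b).toReal - η/4) / Real.log ρ') * (-Real.log κ)
          ≤ (d:ℝ) * (Cm/X0) * (-Real.log κ) := by
        apply mul_le_mul_of_nonneg_right _ (by linarith : 0 ≤ -Real.log κ)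
        exact mul_le_mul_of_nonneg_left hβub (by positivity)
      have h4 : (d:ℝ) * (Cm/X0) * (-Real.log κ) = A / X0 := by
        rw [hAdef]; ring
      have h5 : A / X0 ≤ η/4 := by
        rw [hX0def, div_le_iff₀ (by positivity)]
        have he : η/4 * ((A+1) * (4/η)) = A + 1 := by field_simp
        linarith
      have h6 : -((d:ℝ) * (((Mbar ε b).toReal - η/4) / Real.log ρ') * Real.log κ)
          = (d:ℝ) * (((Mbar ε b).toReal - η/4) / Real.log ρ') * (-Real.log κ) := by ring
      linarith [h3, h4 ▸ h3]
    -- transfer back to a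
    have htr2 := transfer hε hbs has hq2s hδ0.le (by linarith : δ < ρ') hclose hq2supp
    have hE1' : dTV a b / (ε + dTV a b) / (ρ' - δ) ≤ η/4 := by
      have := hEbound (dTV a b) ρ' (η/2) (dTV_nonneg _ _) hdtv2 hρ'0 hδρ'
        (by
          rw [show ε*ρ'*(η/2)/(2*((d:ℝ)+1)) = ε*ρ'*η/(4*((d:ℝ)+1)) by
            rw [div_eq_div_iff (by positivity : (0:ℝ) < 2*((d:ℝ)+1)).ne'
              (by positivity : (0:ℝ) < 4*((d:ℝ)+1)).ne']
            ring]
          exact hδB)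
        (by linarith)
      linarith
    have hga2 : (⨅ p ∈ nbhd a ε, obj q2 p) ≤ (((Mbar ε a).toReal : ℝ) : EReal) :=
      (le_iSup₂ (f := fun q (_ : q ∈ simplex d) => ⨅ p ∈ nbhd a ε, obj q p) q2 hq2s).trans
        (le_of_eq hmaeq)
    have hfinal : ((((Mbar ε b).toReal - η/4
          + (d:ℝ) * (((Mbar ε b).toReal - η/4) / Real.log ρ') * Real.log κ : ℝ)) : EReal)
        ≤ (((Mbar ε a).toReal + η/4 : ℝ) : EReal) := by
      calc ((((Mbar ε b).toReal - η/4
            + (d:ℝ) * (((Mbar ε b).toReal - η/4) / Real.log ρ') * Real.log κ : ℝ)) : EReal)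
          ≤ ⨅ p ∈ nbhd b ε, obj q2 p := hq2g
        _ ≤ (⨅ p ∈ nbhd a ε, obj q2 p) + ((dTV a b / (ε + dTV a b) / (ρ' - δ) : ℝ) : EReal) := htr2
        _ ≤ (((Mbar ε a).toReal : ℝ) : EReal) + ((η/4 : ℝ) : EReal) :=
              add_le_add hga2 (EReal.coe_le_coe_iff.2 hE1')
        _ = (((Mbar ε a).toReal + η/4 : ℝ) : EReal) := by rw [← EReal.coe_add]
    have := EReal.coe_le_coe_iff.1 hfinal
    linarith
  exact abs_le.2 ⟨by linarith, by linarith⟩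

end main


/-- on `D = {p̂ ∈ Δ(V) : ε < max_i p̂_i}`, the game value `M̄` is
real-valued and continuous. -/
theorem stmt17 {d : ℕ} (ε : ℝ) (hε : 0 < ε) :
    (∀ phat ∈ {phat : Fin d → ℝ | phat ∈ simplex d ∧ ∃ i, ε < phat i},
        ∃ r : ℝ, Mbar ε phat = (r : EReal))
    ∧ ContinuousOn (Mbar (d := d) ε)
        {phat : Fin d → ℝ | phat ∈ simplex d ∧ ∃ i, ε < phat i} := by
  constructor
  · rintro phat ⟨hps, i0, hi0⟩
    exact ⟨(Mbar ε phat).toReal, Mbar_real hε hps hi0⟩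
  · intro a ha
    obtain ⟨has, i0, hi0⟩ := ha
    have hma : Mbar ε a = (((Mbar ε a).toReal : ℝ) : EReal) := Mbar_real hε has hi0
    have htd : Filter.Tendsto (fun b => (Mbar ε b).toReal)
        (nhdsWithin a {phat : Fin d → ℝ | phat ∈ simplex d ∧ ∃ i, ε < phat i})
        (nhds ((Mbar ε a).toReal)) := by
      rw [Metric.tendsto_nhdsWithin_nhds]
      intro η hη
      obtain ⟨δ, hδ0, hkey⟩ := key_estimate hε has hi0 (show (0:ℝ) < η/2 by linarith)
      refine ⟨δ, hδ0, ?_⟩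
      intro b hb hdist
      have hcl : ∀ i, |b i - a i| ≤ δ := by
        intro i
        have h1 : dist (b i) (a i) ≤ dist b a := dist_le_pi_dist b a i
        rw [Real.dist_eq] at h1
        linarith
      have h2 := hkey b hb.1 hcl
      rw [Real.dist_eq]
      linarith
    have h1 : Filter.Tendsto (fun b => (((Mbar ε b).toReal : ℝ) : EReal))
        (nhdsWithin a {phat : Fin d → ℝ | phat ∈ simplex d ∧ ∃ i, ε < phat i})
        (nhds (Mbar ε a)) := by
      rw [hma]
      exact EReal.tendsto_coe.2 htd
    have heq : (fun b => (((Mbar ε b).toReal : ℝ) : EReal))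
        =ᶠ[nhdsWithin a {phat : Fin d → ℝ | phat ∈ simplex d ∧ ∃ i, ε < phat i}] Mbar ε := by
      apply Filter.eventuallyEq_of_mem self_mem_nhdsWithin
      intro b hb
      obtain ⟨hbs, i, hi⟩ := hb
      exact (Mbar_real hε hbs hi).symm
    exact Filter.Tendsto.congr' heq h1
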